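/- Let a₁, a₂, w₁, w₂ be complex numbers with |w₁| < 1, |w₂| < 1, and suppose Re((1 - w₁·conj(w₂))·a₁·conj(a₂)) ≥ 0. Then for every t ∈ (0,1) with a₁ ≠ 0 and a₂ ≠ 0, one has |t·w₁·a₁ + (1-t)·w₂·a₂| < |t·a₁ + (1-t)·a₂|. More precisely, |t·a₁ + (1-t)·a₂|² − |t·w₁·a₁ + (1-t)·w₂·a₂|² = t²(1−|w₁|²)|a₁|² + (1−t)²(1−|w₂|²)|a₂|² + 2t(1−t)·Re((1 − w₁·conj(w₂))·a₁·conj(a₂)) > 0. -/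

import Mathlib

open Complex

theorem stmt_6 (a₁ a₂ w₁ w₂ : ℂ)
    (hw₁ : ‖w₁‖ < 1) (hw₂ : ‖w₂‖ < 1)
    (hre : 0 ≤ ((1 - w₁ * (starRingEnd ℂ) w₂) * a₁ * (starRingEnd ℂ) a₂).re)
    (t : ℝ) (ht : t ∈ Set.Ioo (0 : ℝ) 1) (ha₁ : a₁ ≠ 0) (ha₂ : a₂ ≠ 0) :
    ‖(t : ℂ) * w₁ * a₁ + (1 - (t : ℂ)) * w₂ * a₂‖ <
      ‖(t : ℂ) * a₁ + (1 - (t : ℂ)) * a₂‖ ∧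
    (‖(t : ℂ) * a₁ + (1 - (t : ℂ)) * a₂‖) ^ 2 -
        (‖(t : ℂ) * w₁ * a₁ + (1 - (t : ℂ)) * w₂ * a₂‖) ^ 2 =
      t ^ 2 * (1 - (‖w₁‖) ^ 2) * (‖a₁‖) ^ 2 +
        (1 - t) ^ 2 * (1 - (‖w₂‖) ^ 2) * (‖a₂‖) ^ 2 +
        2 * t * (1 - t) * ((1 - w₁ * (starRingEnd ℂ) w₂) * a₁ * (starRingEnd ℂ) a₂).re ∧
    0 < t ^ 2 * (1 - (‖w₁‖) ^ 2) * (‖a₁‖) ^ 2 +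
        (1 - t) ^ 2 * (1 - (‖w₂‖) ^ 2) * (‖a₂‖) ^ 2 +
        2 * t * (1 - t) * ((1 - w₁ * (starRingEnd ℂ) w₂) * a₁ * (starRingEnd ℂ) a₂).re := by
  obtain ⟨ht0, ht1⟩ := ht
  have hkey : (‖(t : ℂ) * a₁ + (1 - (t : ℂ)) * a₂‖) ^ 2 -
        (‖(t : ℂ) * w₁ * a₁ + (1 - (t : ℂ)) * w₂ * a₂‖) ^ 2 =
      t ^ 2 * (1 - (‖w₁‖) ^ 2) * (‖a₁‖) ^ 2 +
        (1 - t) ^ 2 * (1 - (‖w₂‖) ^ 2) * (‖a₂‖) ^ 2 +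
        2 * t * (1 - t) * ((1 - w₁ * (starRingEnd ℂ) w₂) * a₁ * (starRingEnd ℂ) a₂).re := by
    simp only [Complex.sq_norm, Complex.normSq_apply, Complex.add_re, Complex.add_im,
      Complex.mul_re, Complex.mul_im, Complex.sub_re, Complex.sub_im, Complex.one_re,
      Complex.one_im, Complex.ofReal_re, Complex.ofReal_im, Complex.conj_re, Complex.conj_im]
    ring
  have h1 : 0 < (‖a₁‖) ^ 2 := pow_pos (norm_pos_iff.mpr ha₁) 2
  have h2 : 0 < (‖a₂‖) ^ 2 := pow_pos (norm_pos_iff.mpr ha₂) 2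
  have hw1 : (‖w₁‖) ^ 2 < 1 := by nlinarith [norm_nonneg w₁]
  have hw2 : (‖w₂‖) ^ 2 < 1 := by nlinarith [norm_nonneg w₂]
  have hpos : 0 < t ^ 2 * (1 - (‖w₁‖) ^ 2) * (‖a₁‖) ^ 2 +
        (1 - t) ^ 2 * (1 - (‖w₂‖) ^ 2) * (‖a₂‖) ^ 2 +
        2 * t * (1 - t) * ((1 - w₁ * (starRingEnd ℂ) w₂) * a₁ * (starRingEnd ℂ) a₂).re := by
    have A := mul_pos (mul_pos (pow_pos ht0 2) (sub_pos.mpr hw1)) h1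
    have B := mul_pos (mul_pos (pow_pos (sub_pos.mpr ht1) 2) (sub_pos.mpr hw2)) h2
    have C : (0:ℝ) ≤ 2 * t * (1 - t) *
        ((1 - w₁ * (starRingEnd ℂ) w₂) * a₁ * (starRingEnd ℂ) a₂).re := by
      apply mul_nonneg _ hre
      nlinarith
    linarith
  refine ⟨?_, hkey, hpos⟩
  have := hkey ▸ hpos
  have hsq : (‖(t : ℂ) * w₁ * a₁ + (1 - (t : ℂ)) * w₂ * a₂‖) ^ 2 <
      (‖(t : ℂ) * a₁ + (1 - (t : ℂ)) * a₂‖) ^ 2 := by linarith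
  exact lt_of_pow_lt_pow_left₀ 2 (norm_nonneg _) hsq
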